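/- If a degree-n polynomial f over a field K is solvable by radicals, then such is witnessed over the splitting field: the Galois group of f over K is a solvable group (assuming K has characteristic zero). -/

import Mathlib

open Polynomial in
theorem gal_isSolvable_of_solvableByRad {K : Type*} [Field K] [CharZero K] (f : K[X])
    (hf : ∀ x : AlgebraicClosure K, aeval x f = 0 → IsSolvableByRad K x) :
    IsSolvable f.Gal := by
  by_cases hf0 : f = 0
  · rw [hf0]; exact gal_zero_isSolvable
  obtain ⟨u, hu⟩ := (UniqueFactorizationMonoid.factors_prod hf0).symm
  obtain ⟨c, hc⟩ := Polynomial.isUnit_iff.mp u⁻¹.isUnit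
  have key : ∀ p ∈ UniqueFactorizationMonoid.factors f, IsSolvable p.Gal := by
    intro p hp
    have hirr : Irreducible p := UniqueFactorizationMonoid.irreducible_of_factor p hp
    have hdvd : p ∣ f := UniqueFactorizationMonoid.dvd_of_mem_factors hp
    obtain ⟨α, hα⟩ := IsAlgClosed.exists_eval₂_eq_zero (algebraMap K (AlgebraicClosure K))
      p
      (fun h => hirr.not_isUnit (Polynomial.isUnit_iff_degree_eq_zero.mpr h))
    rw [← Polynomial.aeval_def] at hα
    have hαf : aeval α f = 0 := by
      obtain ⟨q, rfl⟩ := hdvd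
      rw [map_mul, hα, zero_mul]
    have hmem : α ∈ solvableByRad K (AlgebraicClosure K) := by
      have hs := hf α hαf
      clear hα hαf
      induction hs with
      | base a => exact IntermediateField.algebraMap_mem _ a
      | add a b _ _ ha hb => exact add_mem ha hb
      | neg a _ ha => exact neg_mem ha
      | mul a b _ _ ha hb => exact mul_mem ha hb
      | inv a _ ha => exact inv_mem ha
      | rad a n hn _ ha => exact solvableByRad.rad_mem hn ha
    exact solvableByRad.isSolvable' hmem hirr hα
  have : IsSolvable ((UniqueFactorizationMonoid.factors f).prod * C c).Gal :=
    gal_mul_isSolvable (gal_prod_isSolvable key) (gal_C_isSolvable c)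
  have hfeq : f = (UniqueFactorizationMonoid.factors f).prod * ↑u⁻¹ := by
    rw [← hu, Units.mul_inv_cancel_right]
  rwa [hc.2, ← hfeq] at this
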